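/- Let d be a positive integer, ℓ ∈ [0,1]^d, and p, q ∈ ℝ^d with p(i) > 0 and q(i) ≥ 0 for all i. Then ( Σ_{i=1}^d ℓ(i)·max(p(i) − q(i), 0) )² ≤ 2 · ( Σ_{i=1}^d ℓ(i)·p(i) ) · Ent(q,p). -/

import Mathlib

open Real Finset

private lemma aux_hasDeriv (x : ℝ) (hx : x ≠ 0) :
    HasDerivAt (fun x : ℝ => 2*(x*Real.log x - x + 1) - (1-x)^2)
      (2*Real.log x + 2*(1-x)) x := by
  have h1 := Real.hasDerivAt_mul_log hx
  have h2 : HasDerivAt (fun x : ℝ => 2*(x*Real.log x - x + 1))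
      (2*((Real.log x + 1) - 1)) x :=
    (((h1.sub (hasDerivAt_id x)).add_const 1).const_mul 2)
  have h3 : HasDerivAt (fun x : ℝ => (1-x)^2) (2*(1-x)^1*(-1)) x := by
    have : HasDerivAt (fun x : ℝ => 1 - x) (-1) x := by
      simpa using (hasDerivAt_id x).const_sub 1
    simpa using this.fun_pow 2
  have := h2.fun_sub h3
  exact this.congr_deriv (by ring)

private lemma log_key {t : ℝ} (ht0 : 0 < t) (ht1 : t ≤ 1) :
    (1 - t)^2 ≤ 2*(t*Real.log t - t + 1) := by
  set f : ℝ → ℝ := fun x => 2*(x*Real.log x - x + 1) - (1-x)^2 with hf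
  have hanti : AntitoneOn f (Set.Icc t 1) := by
    apply antitoneOn_of_deriv_nonpos (convex_Icc t 1)
    · intro x hx
      have hx0 : (0:ℝ) < x := lt_of_lt_of_le ht0 hx.1
      exact (aux_hasDeriv x hx0.ne').continuousAt.continuousWithinAt
    · intro x hx
      rw [interior_Icc] at hx
      have hx0 : (0:ℝ) < x := lt_trans ht0 hx.1
      exact (aux_hasDeriv x hx0.ne').differentiableAt.differentiableWithinAt
    · intro x hx
      rw [interior_Icc] at hx
      have hx0 : (0:ℝ) < x := lt_trans ht0 hx.1
      rw [(aux_hasDeriv x hx0.ne').deriv]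
      have := Real.log_le_sub_one_of_pos hx0
      linarith
  have h := hanti (Set.left_mem_Icc.2 ht1) (Set.right_mem_Icc.2 ht1) ht1
  have hf1 : f 1 = 0 := by simp [hf]
  rw [hf1] at h
  simp only [hf] at h
  linarith

-- entropy term nonnegativity
private lemma ent_nonneg {p q : ℝ} (hp : 0 < p) (hq : 0 ≤ q) :
    0 ≤ q * Real.log (q / p) - q + p := by
  rcases eq_or_lt_of_le hq with h | hq
  · simp [← h, hp.le]
  · have hpq : 0 < p / q := div_pos hp hq
    have := Real.log_le_sub_one_of_pos hpq
    have hlog : Real.log (q / p) = - Real.log (p / q) := by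
      rw [← Real.log_inv, inv_div]
    rw [hlog]
    have h2 : q * Real.log (p / q) ≤ q * (p / q - 1) := by
      exact mul_le_mul_of_nonneg_left this hq.le
    have h3 : q * (p / q - 1) = p - q := by field_simp
    nlinarith

-- pointwise reverse chi-squared bound
private lemma pointwise {p q : ℝ} (hp : 0 < p) (hq : 0 ≤ q) :
    (max (p - q) 0)^2 / p ≤ 2 * (q * Real.log (q / p) - q + p) := by
  rcases le_or_gt p q with h | h
  · rw [max_eq_right (by linarith)]
    simpa using mul_nonneg (by norm_num : (0:ℝ) ≤ 2) (ent_nonneg hp hq)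
  · rw [max_eq_left (by linarith)]
    rcases eq_or_lt_of_le hq with h0 | hq
    · rw [← h0]
      simp only [sub_zero, mul_zero, zero_mul]
      rw [sq, mul_div_assoc, div_self hp.ne']
      linarith
    · have ht0 : 0 < q / p := div_pos hq hp
      have ht1 : q / p ≤ 1 := (div_le_one hp).2 h.le
      have key := log_key ht0 ht1
      have hexp : (1 - q/p)^2 = (p - q)^2 / p^2 := by
        field_simp
      rw [hexp] at key
      have h2 : 2*((q/p)*Real.log (q/p) - q/p + 1)
          = (2 * (q * Real.log (q/p) - q + p)) / p := by
        field_simp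
      rw [h2] at key
      rw [div_le_div_iff₀ (pow_pos hp 2) hp] at key
      rw [div_le_iff₀ hp]
      nlinarith [sq_nonneg (p - q)]

theorem stmt_8 (d : ℕ) (hd : 0 < d) (ℓ p q : Fin d → ℝ)
    (hℓ : ∀ i, ℓ i ∈ Set.Icc (0 : ℝ) 1) (hp : ∀ i, 0 < p i) (hq : ∀ i, 0 ≤ q i) :
    (∑ i, ℓ i * max (p i - q i) 0) ^ 2 ≤
      2 * (∑ i, ℓ i * p i) * ∑ i, (q i * Real.log (q i / p i) - q i + p i) := by
  set f : Fin d → ℝ := fun i => Real.sqrt (ℓ i * p i)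
  set g : Fin d → ℝ := fun i => Real.sqrt (ℓ i / p i) * max (p i - q i) 0
  have hfg : ∀ i, f i * g i = ℓ i * max (p i - q i) 0 := by
    intro i
    have h1 : Real.sqrt (ℓ i * p i) * Real.sqrt (ℓ i / p i) = ℓ i := by
      rw [← Real.sqrt_mul (mul_nonneg (hℓ i).1 (hp i).le)]
      have : ℓ i * p i * (ℓ i / p i) = (ℓ i)^2 := by
        rw [mul_assoc, mul_div_assoc', mul_div_cancel_left₀ _ (hp i).ne', sq]
      rw [this, Real.sqrt_sq (hℓ i).1]
    calc f i * g i = (Real.sqrt (ℓ i * p i) * Real.sqrt (ℓ i / p i)) * max (p i - q i) 0 := by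
          ring
      _ = ℓ i * max (p i - q i) 0 := by rw [h1]
  have hcs := Finset.sum_mul_sq_le_sq_mul_sq Finset.univ f g
  simp only [hfg] at hcs
  have hf2 : ∀ i, f i ^ 2 = ℓ i * p i := fun i =>
    Real.sq_sqrt (mul_nonneg (hℓ i).1 (hp i).le)
  have hg2 : ∀ i, g i ^ 2 ≤ 2 * (q i * Real.log (q i / p i) - q i + p i) := by
    intro i
    have : g i ^ 2 = (ℓ i / p i) * (max (p i - q i) 0)^2 := by
      rw [mul_pow, Real.sq_sqrt (div_nonneg (hℓ i).1 (hp i).le)]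
    rw [this]
    have hle : (ℓ i / p i) * (max (p i - q i) 0)^2 ≤ (max (p i - q i) 0)^2 / p i := by
      rw [div_mul_eq_mul_div, div_le_div_iff₀ (hp i) (hp i)]
      have : ℓ i * (max (p i - q i) 0)^2 ≤ 1 * (max (p i - q i) 0)^2 :=
        mul_le_mul_of_nonneg_right (hℓ i).2 (sq_nonneg _)
      nlinarith [(hp i).le, sq_nonneg (max (p i - q i) 0)]
    exact hle.trans (pointwise (hp i) (hq i))
  calc (∑ i, ℓ i * max (p i - q i) 0) ^ 2
      ≤ (∑ i, f i ^ 2) * ∑ i, g i ^ 2 := hcs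
    _ ≤ (∑ i, ℓ i * p i) * ∑ i, 2 * (q i * Real.log (q i / p i) - q i + p i) := by
        have hfs : ∑ i, f i ^ 2 = ∑ i, ℓ i * p i :=
          Finset.sum_congr rfl fun i _ => hf2 i
        rw [hfs]
        exact mul_le_mul_of_nonneg_left (Finset.sum_le_sum fun i _ => hg2 i)
          (Finset.sum_nonneg fun i _ => mul_nonneg (hℓ i).1 (hp i).le)
    _ = 2 * (∑ i, ℓ i * p i) * ∑ i, (q i * Real.log (q i / p i) - q i + p i) := by
        rw [← Finset.mul_sum]; ring
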